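/- arXiv:math/0308045 — 2 statements merged into one kernel-verified Lean document; each statement's English description precedes it below -/
import Mathlib

section
/- Let P be a hereditary graph property. Then: (i) F_⊆(P) is finite if and only if F_≤(P) is finite; and (ii) the following are equivalent: F_⊆(P) = F_≤(P); F_≤(P) is a ⊆-antichain; for each n ∈ ℕ, the set F_≤(P,n) of graphs in F_≤(P) with exactly n vertices is a ⊆-antichain. -/
attribute [local instance] Classical.propDecidable

open SimpleGraph

/-- A finite simple graph, bundled. -/
structure FGraph : Type 1 where
  V : Type
  [fin : Fintype V]
  graph : SimpleGraph V

attribute [instance] FGraph.fin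

namespace FGraph

/-- `G.IsInduced H` : `G` is isomorphic to an induced subgraph of `H`. -/
def IsInduced (G H : FGraph) : Prop := Nonempty (G.graph ↪g H.graph)

/-- `G.IsSub H` : `G` is isomorphic to a subgraph of `H`. -/
def IsSub (G H : FGraph) : Prop := ∃ f : G.graph →g H.graph, Function.Injective f

/-- `G.Iso H` : `G` and `H` are isomorphic. -/
def Iso (G H : FGraph) : Prop := Nonempty (G.graph ≃g H.graph)

/-- The induced subgraph of `G` on a set `s` of vertices. -/
noncomputable def induce (G : FGraph) (s : Set G.V) : FGraph := ⟨↥s, G.graph.induce s⟩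

end FGraph

/-- A class of finite graphs. -/
abbrev GProp : Type 1 := FGraph → Prop

/-- A graph property: a nonempty isomorphism-closed class of finite graphs,
each having at least one vertex. -/
structure IsGProp (P : GProp) : Prop where
  nonempty : ∃ G, P G
  vertexNonempty : ∀ G, P G → Nonempty G.V
  isoClosed : ∀ G H, G.Iso H → P G → P H

namespace GProp

/-- The product `P ∘ Q` of two classes of graphs. -/
def prod (P Q : GProp) : GProp := fun G =>
  Nonempty G.V ∧ ∃ s : Set G.V,
    (s.Nonempty → P (G.induce s)) ∧ ((sᶜ : Set G.V).Nonempty → Q (G.induce (sᶜ : Set G.V)))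

/-- The product `∏ i, Ps i` of an indexed family of classes of graphs:
the vertex set is partitioned into the (possibly empty) preimages of a map
to the index set, and every nonempty part must induce a graph in the
corresponding class. -/
def iProd {I : Type*} (Ps : I → GProp) : GProp := fun G =>
  Nonempty G.V ∧ ∃ f : G.V → I,
    ∀ i, (f ⁻¹' {i}).Nonempty → Ps i (G.induce (f ⁻¹' {i}))

end GProp

/-- Closed under induced subgraphs with at least one vertex. -/
def IndHereditary (P : GProp) : Prop :=
  ∀ G H : FGraph, P G → H.IsInduced G → Nonempty H.V → P H

/-- Closed under subgraphs with at least one vertex. -/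
def Hereditary (P : GProp) : Prop :=
  ∀ G H : FGraph, P G → H.IsSub G → Nonempty H.V → P H

/-- Closed under induced supergraphs. -/
def GeqHereditary (P : GProp) : Prop :=
  ∀ G H : FGraph, P H → H.IsInduced G → P G


/-- `F_⊆(P)`: minimal forbidden subgraphs of `P`, i.e. graphs `H ∉ P` all of
whose proper subgraphs (subgraphs not containing `H` back) are in `P`. -/
def ForbSub (P : GProp) : GProp := fun H =>
  Nonempty H.V ∧ ¬ P H ∧
    ∀ K : FGraph, Nonempty K.V → K.IsSub H → ¬ H.IsSub K → P K

/-- `F_≤(P)`: minimal forbidden induced subgraphs of `P`. -/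
def ForbInd (P : GProp) : GProp := fun H =>
  Nonempty H.V ∧ ¬ P H ∧
    ∀ K : FGraph, Nonempty K.V → K.IsInduced H → ¬ H.IsInduced K → P K

/-- A class of graphs is finite up to isomorphism. -/
def FiniteUpToIso (S : GProp) : Prop :=
  ∃ (n : ℕ) (f : Fin n → FGraph), ∀ H, S H → ∃ i, H.Iso (f i)

/-- A `⊆`-antichain: no member is isomorphic to a subgraph of another
(non-isomorphic) member. -/
def SubAntichain (S : GProp) : Prop :=
  ∀ G H, S G → S H → G.IsSub H → G.Iso H

/-! ### Auxiliary lemmas -/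

namespace FGraph

lemma IsSub.refl (G : FGraph) : G.IsSub G := ⟨Hom.id, fun _ _ h => h⟩

lemma IsSub.trans {G H K : FGraph} (h1 : G.IsSub H) (h2 : H.IsSub K) : G.IsSub K := by
  obtain ⟨f, hf⟩ := h1; obtain ⟨g, hg⟩ := h2
  exact ⟨g.comp f, hg.comp hf⟩

lemma IsInduced.isSub {G H : FGraph} (h : G.IsInduced H) : G.IsSub H :=
  ⟨h.some.toHom, h.some.injective⟩

lemma Iso.symm {G H : FGraph} (h : G.Iso H) : H.Iso G := ⟨h.some.symm⟩
lemma Iso.isInduced {G H : FGraph} (h : G.Iso H) : G.IsInduced H := ⟨h.some.toEmbedding⟩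
lemma Iso.isSub {G H : FGraph} (h : G.Iso H) : G.IsSub H := h.isInduced.isSub
lemma Iso.card_eq {G H : FGraph} (h : G.Iso H) : Fintype.card G.V = Fintype.card H.V :=
  Fintype.card_congr h.some.toEquiv

lemma IsSub.card_le {G H : FGraph} (h : G.IsSub H) : Fintype.card G.V ≤ Fintype.card H.V :=
  Fintype.card_le_of_injective _ h.choose_spec

lemma IsInduced.card_le {G H : FGraph} (h : G.IsInduced H) :
    Fintype.card G.V ≤ Fintype.card H.V := h.isSub.card_le

/-- Mutual subgraphs are isomorphic. -/
lemma iso_of_isSub_isSub {G H : FGraph} (h1 : G.IsSub H) (h2 : H.IsSub G) : G.Iso H := by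
  obtain ⟨f, hf⟩ := h1; obtain ⟨g, hg⟩ := h2
  have hcard : Fintype.card G.V = Fintype.card H.V :=
    le_antisymm (Fintype.card_le_of_injective _ hf) (Fintype.card_le_of_injective _ hg)
  have hbij : Function.Bijective (fun v => g (f v)) :=
    Finite.injective_iff_bijective.mp (hg.comp hf)
  let π : Equiv.Perm G.V := Equiv.ofBijective _ hbij
  have mono : ∀ u v, G.graph.Adj u v → G.graph.Adj (π u) (π v) := fun u v h =>
    g.map_adj (f.map_adj h)
  have iter : ∀ m u v, G.graph.Adj u v → G.graph.Adj ((π ^ m) u) ((π ^ m) v) := by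
    intro m
    induction m with
    | zero => simp
    | succ k ih =>
      intro u v h
      have := mono _ _ (ih u v h)
      simpa [pow_succ', Equiv.Perm.mul_apply] using this
  have rev : ∀ u v, G.graph.Adj (π u) (π v) → G.graph.Adj u v := by
    intro u v h
    have hk : 0 < orderOf π := orderOf_pos π
    have h2 := iter (orderOf π - 1) _ _ h
    have heq : ∀ w, (π ^ (orderOf π - 1)) (π w) = w := by
      intro w
      have hw : (π ^ (orderOf π - 1)) (π w) = (π ^ (orderOf π - 1) * π) w := rfl
      rw [hw, ← pow_succ, Nat.sub_add_cancel hk, pow_orderOf_eq_one]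
      rfl
    rwa [heq u, heq v] at h2
  have fbij : Function.Bijective f :=
    (Fintype.bijective_iff_injective_and_card f).mpr ⟨hf, hcard⟩
  refine ⟨⟨Equiv.ofBijective f fbij, ?_⟩⟩
  intro a b
  exact ⟨fun h => rev a b (g.map_adj h), f.map_adj⟩

lemma iso_of_isInduced_card {G H : FGraph} (h : G.IsInduced H)
    (hc : Fintype.card H.V ≤ Fintype.card G.V) : G.Iso H := by
  obtain ⟨e⟩ := h
  have fbij : Function.Bijective e :=
    (Fintype.bijective_iff_injective_and_card e).mpr
      ⟨e.injective, le_antisymm (Fintype.card_le_of_injective _ e.injective) hc⟩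
  exact ⟨⟨Equiv.ofBijective e fbij, e.map_rel_iff⟩⟩

end FGraph

section EdgeCount

variable {V W : Type} [Fintype V] [Fintype W] {G : SimpleGraph V} {H : SimpleGraph W}

lemma edge_card_le' (f : G →g H) (hf : Function.Injective f) :
    Nat.card G.edgeSet ≤ Nat.card H.edgeSet :=
  Nat.card_le_card_of_injective f.mapEdgeSet (Hom.mapEdgeSet.injective f hf)

lemma iso_of_card_eq' (f : G →g H) (hf : Function.Injective f)
    (hv : Fintype.card V = Fintype.card W)
    (he : Nat.card G.edgeSet = Nat.card H.edgeSet) : Nonempty (G ≃g H) := by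
  have fbij : Function.Bijective f :=
    (Fintype.bijective_iff_injective_and_card f).mpr ⟨hf, hv⟩
  have ebij : Function.Bijective f.mapEdgeSet :=
    (Nat.bijective_iff_injective_and_card _).mpr ⟨Hom.mapEdgeSet.injective f hf, he⟩
  refine ⟨⟨Equiv.ofBijective f fbij, ?_⟩⟩
  intro a b
  refine ⟨fun h => ?_, f.map_adj⟩
  obtain ⟨⟨e, he'⟩, heq⟩ := ebij.2 ⟨s(f a, f b), h⟩
  induction e with
  | _ u v =>
    simp only [Hom.mapEdgeSet, Sym2.map_pair_eq, Subtype.mk_eq_mk] at heq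
    replace heq : s(f u, f v) = s(f a, f b) := congrArg Subtype.val heq
    rw [Sym2.eq_iff] at heq
    rcases heq with ⟨h1, h2⟩ | ⟨h1, h2⟩
    · rw [← hf h1, ← hf h2]; exact he'
    · rw [← hf h1, ← hf h2]; exact he'.symm

end EdgeCount

/-- A size measure on bundled finite graphs: vertices plus edges. -/
noncomputable def msize (G : FGraph) : ℕ :=
  Fintype.card G.V + Nat.card G.graph.edgeSet

lemma msize_lt {K G : FGraph} (h : K.IsSub G) (hn : ¬ G.IsSub K) : msize K < msize G := by
  obtain ⟨f, hf⟩ := h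
  have hv : Fintype.card K.V ≤ Fintype.card G.V := Fintype.card_le_of_injective _ hf
  have he : Nat.card K.graph.edgeSet ≤ Nat.card G.graph.edgeSet := edge_card_le' f hf
  have hne : ¬ (Fintype.card K.V = Fintype.card G.V ∧
      Nat.card K.graph.edgeSet = Nat.card G.graph.edgeSet) := by
    rintro ⟨h1, h2⟩
    obtain ⟨iso⟩ := iso_of_card_eq' f hf h1 h2
    exact hn (FGraph.Iso.isSub (FGraph.Iso.symm ⟨iso⟩))
  unfold msize
  omega

lemma exists_forbSub_aux (P : GProp) :
    ∀ n (G : FGraph), msize G ≤ n → Nonempty G.V → ¬ P G →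
      ∃ H, ForbSub P H ∧ H.IsSub G := by
  intro n
  induction n with
  | zero =>
    intro G hm hne hnp
    by_cases hall : ∀ K : FGraph, Nonempty K.V → K.IsSub G → ¬ G.IsSub K → P K
    · exact ⟨G, ⟨hne, hnp, hall⟩, FGraph.IsSub.refl G⟩
    · push_neg at hall
      obtain ⟨K, _, hKsub, hKnsub, _⟩ := hall
      have := msize_lt hKsub hKnsub
      omega
  | succ n ih =>
    intro G hm hne hnp
    by_cases hall : ∀ K : FGraph, Nonempty K.V → K.IsSub G → ¬ G.IsSub K → P K
    · exact ⟨G, ⟨hne, hnp, hall⟩, FGraph.IsSub.refl G⟩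
    · push_neg at hall
      obtain ⟨K, hKne, hKsub, hKnsub, hKnp⟩ := hall
      have := msize_lt hKsub hKnsub
      obtain ⟨H, hH, hHs⟩ := ih K (by omega) hKne hKnp
      exact ⟨H, hH, hHs.trans hKsub⟩

/-- Every graph not in `P` (with a vertex) contains a minimal forbidden subgraph. -/
lemma exists_forbSub (P : GProp) (G : FGraph) (hne : Nonempty G.V) (hnp : ¬ P G) :
    ∃ H, ForbSub P H ∧ H.IsSub G :=
  exists_forbSub_aux P (msize G) G le_rfl hne hnp

lemma forbSub_subset_forbInd (P : GProp) (H : FGraph) (h : ForbSub P H) : ForbInd P H := by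
  obtain ⟨hne, hnp, hmin⟩ := h
  refine ⟨hne, hnp, fun K hKne hKind hKn => ?_⟩
  refine hmin K hKne hKind.isSub fun hHK => ?_
  exact hKn (FGraph.iso_of_isSub_isSub hHK hKind.isSub).isInduced

lemma forbSub_antichain (P : GProp) : SubAntichain (ForbSub P) := by
  intro G H hG hH hsub
  by_cases hHG : H.IsSub G
  · exact FGraph.iso_of_isSub_isSub hsub hHG
  · exact absurd (hH.2.2 G hG.1 hsub hHG) hG.2.1

lemma induce_isInduced (G : FGraph) (s : Set G.V) : (G.induce s).IsInduced G :=
  ⟨SimpleGraph.Embedding.induce s⟩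

lemma isSub_induce_range {G H : FGraph} (f : G.graph →g H.graph) (hf : Function.Injective f) :
    G.IsSub (H.induce (Set.range ⇑f)) := by
  refine ⟨⟨fun v => ⟨f v, ⟨v, rfl⟩⟩, ?_⟩, ?_⟩
  · intro a b hab
    exact f.map_adj hab
  · intro a b h
    exact hf (congrArg Subtype.val h)

lemma card_induce_range {G H : FGraph} (f : G.graph →g H.graph) (hf : Function.Injective f) :
    Fintype.card (H.induce (Set.range ⇑f)).V = Fintype.card G.V :=
  Fintype.card_congr (Equiv.ofInjective _ hf).symm

/-- Transfer a graph to one on `Fin (card V)`. -/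
noncomputable def canon {V : Type} [Fintype V] (G : SimpleGraph V) :
    SimpleGraph (Fin (Fintype.card V)) where
  Adj a b := G.Adj ((Fintype.equivFin V).symm a) ((Fintype.equivFin V).symm b)
  symm := ⟨fun _ _ h => G.adj_symm h⟩
  loopless := ⟨fun _ h => G.irrefl h⟩

noncomputable def canonIso {V : Type} [Fintype V] (G : SimpleGraph V) :
    G ≃g canon G where
  toEquiv := Fintype.equivFin V
  map_rel_iff' := by intro a b; simp [canon]

lemma finiteUpToIso_of_bounded (S : GProp) (N : ℕ)
    (hb : ∀ H, S H → Fintype.card H.V ≤ N) : FiniteUpToIso S := by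
  classical
  let T := (m : Fin (N + 1)) × SimpleGraph (Fin m)
  let mk : T → FGraph := fun t => ⟨Fin t.1, t.2⟩
  let e := Fintype.equivFin T
  refine ⟨Fintype.card T, fun i => mk (e.symm i), fun H hS => ?_⟩
  have hle := hb H hS
  let t : T := ⟨⟨Fintype.card H.V, by omega⟩, canon H.graph⟩
  refine ⟨e t, ?_⟩
  show H.Iso (mk (e.symm (e t)))
  rw [Equiv.symm_apply_apply]
  exact ⟨canonIso H.graph⟩

/-- for a hereditary graph property `P`:
(i) `F_⊆(P)` is finite iff `F_≤(P)` is finite; and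
(ii) `F_⊆(P) = F_≤(P)` iff `F_≤(P)` is a `⊆`-antichain, iff for each `n` the
set `F_≤(P, n)` of its members on `n` vertices is a `⊆`-antichain. -/
theorem statement_18 (P : GProp) (hP : IsGProp P) (hher : Hereditary P) :
    (FiniteUpToIso (ForbSub P) ↔ FiniteUpToIso (ForbInd P)) ∧
    (ForbSub P = ForbInd P ↔ SubAntichain (ForbInd P)) ∧
    (SubAntichain (ForbInd P) ↔
      ∀ n : ℕ, SubAntichain (fun H => ForbInd P H ∧ Fintype.card H.V = n)) := by
  have incl : ∀ H, ForbSub P H → ForbInd P H := forbSub_subset_forbInd P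
  refine ⟨⟨?_, ?_⟩, ⟨?_, ?_⟩, ⟨?_, ?_⟩⟩
  · -- ForbSub finite → ForbInd finite
    rintro ⟨n, f, hf⟩
    refine finiteUpToIso_of_bounded _ (Finset.univ.sup fun i => Fintype.card (f i).V) ?_
    rintro G ⟨hne, hnp, hmin⟩
    obtain ⟨H, hH, hsub⟩ := exists_forbSub P G hne hnp
    obtain ⟨fh, fhinj⟩ := hsub
    have h1 : H.IsSub (G.induce (Set.range ⇑fh)) := isSub_induce_range fh fhinj
    have hind : (G.induce (Set.range ⇑fh)).IsInduced G := induce_isInduced G _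
    have hner : Nonempty (G.induce (Set.range ⇑fh)).V :=
      ⟨⟨fh hH.1.some, ⟨hH.1.some, rfl⟩⟩⟩
    have hnp' : ¬ P (G.induce (Set.range ⇑fh)) := fun hp =>
      hH.2.1 (hher _ H hp h1 hH.1)
    have hGind : G.IsInduced (G.induce (Set.range ⇑fh)) := by
      by_contra hcon
      exact hnp' (hmin _ hner hind hcon)
    have hc1 : Fintype.card G.V ≤ Fintype.card H.V := by
      have := hGind.card_le
      rwa [card_induce_range fh fhinj] at this
    obtain ⟨i, hi⟩ := hf H hH
    have hc2 : Fintype.card H.V = Fintype.card (f i).V := hi.card_eq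
    have hc3 : Fintype.card (f i).V ≤ Finset.univ.sup fun i => Fintype.card (f i).V :=
      Finset.le_sup (f := fun i => Fintype.card (f i).V) (Finset.mem_univ i)
    omega
  · -- ForbInd finite → ForbSub finite
    rintro ⟨n, f, hf⟩
    exact ⟨n, f, fun H hH => hf H (incl H hH)⟩
  · -- ForbSub = ForbInd → antichain
    intro heq
    exact heq ▸ forbSub_antichain P
  · -- antichain → ForbSub = ForbInd
    intro hanti
    funext H
    refine propext ⟨incl H, ?_⟩
    rintro ⟨hne, hnp, hmin⟩
    refine ⟨hne, hnp, fun K hKne hKsub hKn => ?_⟩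
    by_contra hKnp
    obtain ⟨H', hH', hH's⟩ := exists_forbSub P K hKne hKnp
    have hiso := hanti H' H (incl _ hH') ⟨hne, hnp, hmin⟩ (hH's.trans hKsub)
    exact hKn (hiso.symm.isSub.trans hH's)
  · -- antichain → level antichains
    intro h n G H hG hH hsub
    exact h G H hG.1 hH.1 hsub
  · -- level antichains → antichain
    intro h G H hG hH hsub
    have hle := hsub.card_le
    have hnlt : ¬ (Fintype.card G.V < Fintype.card H.V) := by
      intro hlt
      obtain ⟨f, finj⟩ := hsub
      have hsub' : G.IsSub (H.induce (Set.range ⇑f)) := isSub_induce_range f finj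
      have hind := induce_isInduced H (Set.range ⇑f)
      have hner : Nonempty (H.induce (Set.range ⇑f)).V :=
        ⟨⟨f hG.1.some, ⟨hG.1.some, rfl⟩⟩⟩
      have hcard : Fintype.card (H.induce (Set.range ⇑f)).V = Fintype.card G.V :=
        card_induce_range f finj
      have hnind : ¬ H.IsInduced (H.induce (Set.range ⇑f)) := fun hc => by
        have := hc.card_le
        omega
      have hp : P (H.induce (Set.range ⇑f)) := hH.2.2 _ hner hind hnind
      exact hG.2.1 (hher _ G hp hsub' hG.1)
    have heq : Fintype.card G.V = Fintype.card H.V := by omega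
    exact h (Fintype.card G.V) G H ⟨hG, rfl⟩ ⟨hH, heq.symm⟩ hsub
end

section
/- Let P be an induced-hereditary graph property. Then P is hereditary if and only if for every H ∈ F_≤(P) and every pair e of nonadjacent vertices of H, there is some G ∈ F_≤(P) such that G is an induced subgraph of H+e (the graph obtained from H by adding the edge e). In this case, P = {F : no graph G ∈ F_≤(P) is isomorphic to a subgraph of F}. -/
attribute [local instance] Classical.propDecidable

open SimpleGraph

/-- `H + e`: the graph obtained from `H` by adding the edge `{a, b}`. -/
def addEdge (H : FGraph) (a b : H.V) : FGraph :=
  ⟨H.V, H.graph ⊔ SimpleGraph.fromEdgeSet {s(a, b)}⟩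

section Aux

variable {P : GProp}

lemma isInduced_trans {G H K : FGraph} (h1 : G.IsInduced H) (h2 : H.IsInduced K) :
    G.IsInduced K := ⟨h2.some.comp h1.some⟩

lemma exists_forbInd_aux (hind : IndHereditary P) :
    ∀ n : ℕ, ∀ F : FGraph, Fintype.card F.V ≤ n → Nonempty F.V → ¬ P F →
      ∃ G, ForbInd P G ∧ G.IsInduced F := by
  intro n
  induction n with
  | zero =>
    intro F hcard hne _
    have := Fintype.card_pos_iff.mpr hne
    omega
  | succ n ih =>
    intro F hcard hne hF
    by_cases hforb : ∀ K : FGraph, Nonempty K.V → K.IsInduced F → ¬ F.IsInduced K → P K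
    · exact ⟨F, ⟨hne, hF, hforb⟩, ⟨SimpleGraph.Embedding.refl⟩⟩
    · push_neg at hforb
      obtain ⟨K, hKne, hKind, hFK, hKP⟩ := hforb
      have hlt : Fintype.card K.V < Fintype.card F.V := by
        obtain ⟨e⟩ := hKind
        rcases lt_or_eq_of_le (Fintype.card_le_of_embedding e.toEmbedding) with h | h
        · exact h
        · exfalso
          have hb : Function.Bijective ⇑e :=
            (Fintype.bijective_iff_injective_and_card ⇑e).mpr ⟨e.injective, h⟩
          have iso : K.graph ≃g F.graph :=
            ⟨Equiv.ofBijective ⇑e hb, e.map_adj_iff⟩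
          exact hFK ⟨iso.symm.toEmbedding⟩
      obtain ⟨G, hG, hGK⟩ := ih K (by omega) hKne hKP
      exact ⟨G, hG, isInduced_trans hGK hKind⟩

lemma exists_forbInd (hind : IndHereditary P) (F : FGraph) (hne : Nonempty F.V) (hF : ¬ P F) :
    ∃ G, ForbInd P G ∧ G.IsInduced F :=
  exists_forbInd_aux hind (Fintype.card F.V) F le_rfl hne hF

lemma addEdge_adj (H : FGraph) (a b x y : H.V) :
    (addEdge H a b).graph.Adj x y ↔
      H.graph.Adj x y ∨ ((x = a ∧ y = b ∨ x = b ∧ y = a) ∧ x ≠ y) := by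
  simp [addEdge, SimpleGraph.fromEdgeSet_adj, Sym2.eq_iff]

lemma removeEdge_mem (hind : IndHereditary P)
    (hC : ∀ H, ForbInd P H → ∀ a b : H.V, a ≠ b → ¬ H.graph.Adj a b →
        ∃ G, ForbInd P G ∧ G.IsInduced (addEdge H a b))
    (K : FGraph) (a b : K.V) (hab : a ≠ b) (hadj : ¬ K.graph.Adj a b)
    (hne : Nonempty K.V) (hPadd : P (addEdge K a b)) : P K := by
  by_contra hK
  obtain ⟨G, hG, ⟨e⟩⟩ := exists_forbInd hind K hne hK
  by_cases hmem : a ∈ Set.range ⇑e ∧ b ∈ Set.range ⇑e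
  · obtain ⟨⟨a', ha'⟩, ⟨b', hb'⟩⟩ := hmem
    have ha'b' : a' ≠ b' := by
      rintro rfl
      exact hab (ha' ▸ hb')
    have hnadj : ¬ G.graph.Adj a' b' := fun h => hadj (by
      have := e.map_adj_iff.mpr h
      rwa [ha', hb'] at this)
    obtain ⟨G₂, hG₂, hG₂ind⟩ := hC G hG a' b' ha'b' hnadj
    have e2 : (addEdge G a' b').graph ↪g (addEdge K a b).graph := by
      refine ⟨e.toEmbedding, ?_⟩
      intro (x : G.V) (y : G.V)
      show (addEdge K a b).graph.Adj (e x) (e y) ↔ (addEdge G a' b').graph.Adj x y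
      rw [addEdge_adj, addEdge_adj, e.map_adj_iff, ← ha', ← hb']
      simp only [ne_eq, e.injective.eq_iff]
    exact hG₂.2.1 (hind _ G₂ hPadd (isInduced_trans hG₂ind ⟨e2⟩) hG₂.1)
  · have e2 : G.graph ↪g (addEdge K a b).graph := by
      refine ⟨e.toEmbedding, ?_⟩
      intro x y
      show (addEdge K a b).graph.Adj (e x) (e y) ↔ G.graph.Adj x y
      rw [addEdge_adj, e.map_adj_iff]
      constructor
      · rintro (h | ⟨(⟨rfl, rfl⟩ | ⟨rfl, rfl⟩), _⟩)
        · exact h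
        · exact absurd ⟨⟨x, rfl⟩, ⟨y, rfl⟩⟩ hmem
        · exact absurd ⟨⟨y, rfl⟩, ⟨x, rfl⟩⟩ hmem
      · exact Or.inl
    exact hG.2.1 (hind _ G hPadd ⟨e2⟩ hG.1)

lemma sub_mem_aux (hind : IndHereditary P)
    (hC : ∀ H, ForbInd P H → ∀ a b : H.V, a ≠ b → ¬ H.graph.Adj a b →
        ∃ G, ForbInd P G ∧ G.IsInduced (addEdge H a b)) :
    ∀ n : ℕ, ∀ (K : FGraph) (G' : SimpleGraph K.V), K.graph ≤ G' → Nonempty K.V →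
      P ⟨K.V, G'⟩ → (G'.edgeSet \ K.graph.edgeSet).ncard ≤ n → P K := by
  intro n
  induction n with
  | zero =>
    intro K G' hle hne hPG hcard
    have hempty : G'.edgeSet \ K.graph.edgeSet = ∅ := by
      rw [← Set.ncard_eq_zero (Set.toFinite _)]
      omega
    have : G' = K.graph := le_antisymm
      (SimpleGraph.edgeSet_subset_edgeSet.mp (Set.diff_eq_empty.mp hempty)) hle
    subst this
    exact hPG
  | succ n ih =>
    intro K G' hle hne hPG hcard
    by_cases hempty : G'.edgeSet \ K.graph.edgeSet = ∅
    · exact ih K G' hle hne hPG (by rw [hempty, Set.ncard_empty]; omega)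
    · obtain ⟨ed, hed⟩ := Set.nonempty_iff_ne_empty.mpr hempty
      revert hed
      induction ed using Sym2.ind with
      | _ a b =>
      intro hed
      have hadjG' : G'.Adj a b := G'.mem_edgeSet.mp hed.1
      have hab : a ≠ b := G'.ne_of_adj hadjG'
      have hnadj : ¬ K.graph.Adj a b := fun h => hed.2 (K.graph.mem_edgeSet.mpr h)
      have hle2 : (addEdge K a b).graph ≤ G' := by
        refine sup_le hle ?_
        intro (x : K.V) (y : K.V) hxy
        rw [SimpleGraph.fromEdgeSet_adj] at hxy
        have := hxy.1
        simp only [Set.mem_singleton_iff, Sym2.eq_iff] at this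
        rcases this with ⟨h1, h2⟩ | ⟨h1, h2⟩
        · rw [h1, h2]; exact hadjG'
        · rw [h1, h2]; exact hadjG'.symm
      have hPG2 : P (addEdge K a b) := by
        have hes : (addEdge K a b).graph.edgeSet = K.graph.edgeSet ∪ {s(a, b)} := by
          change (K.graph ⊔ SimpleGraph.fromEdgeSet {s(a,b)}).edgeSet = _
          rw [SimpleGraph.edgeSet_sup, SimpleGraph.edgeSet_fromEdgeSet]
          congr 1
          ext e
          simp only [Set.mem_diff, Set.mem_singleton_iff, Set.mem_setOf_eq,
            and_iff_left_iff_imp]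
          rintro rfl
          exact fun hdiag => hab (Sym2.mk_isDiag_iff.mp hdiag)
        have hsubset : G'.edgeSet \ (addEdge K a b).graph.edgeSet =
            (G'.edgeSet \ K.graph.edgeSet) \ {s(a, b)} := by
          rw [hes, Set.diff_diff]
        have hbound : (G'.edgeSet \ (addEdge K a b).graph.edgeSet).ncard ≤ n := by
          rw [hsubset]
          have := Set.ncard_diff_singleton_lt_of_mem hed (Set.toFinite _)
          omega
        exact ih (addEdge K a b) G' hle2 hne hPG hbound
      exact removeEdge_mem hind hC K a b hab hnadj hne hPG2

lemma hereditary_of_cond (hind : IndHereditary P)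
    (hC : ∀ H, ForbInd P H → ∀ a b : H.V, a ≠ b → ¬ H.graph.Adj a b →
        ∃ G, ForbInd P G ∧ G.IsInduced (addEdge H a b)) :
    Hereditary P := by
  rintro F K hF ⟨f, hf⟩ hne
  set G' : SimpleGraph K.V := F.graph.comap ⇑f with hG'
  have hle : K.graph ≤ G' := fun x y h => f.map_adj h
  have hPG' : P ⟨K.V, G'⟩ :=
    hind F ⟨K.V, G'⟩ hF ⟨SimpleGraph.Embedding.comap ⟨⇑f, hf⟩ F.graph⟩ hne
  exact sub_mem_aux hind hC _ K G' hle hne hPG' le_rfl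

end Aux


/-- an induced-hereditary graph property `P` is hereditary iff
for every `H ∈ F_≤(P)` and every pair `a ≠ b` of nonadjacent vertices of `H`,
some `G ∈ F_≤(P)` is an induced subgraph of `H + ab`; in this case `P` is
exactly the class of graphs (on ≥ 1 vertex) having no subgraph in `F_≤(P)`. -/
theorem statement_19 (P : GProp) (hP : IsGProp P) (hind : IndHereditary P) :
    (Hereditary P ↔
      ∀ H, ForbInd P H → ∀ a b : H.V, a ≠ b → ¬ H.graph.Adj a b →
        ∃ G, ForbInd P G ∧ G.IsInduced (addEdge H a b)) ∧
    ((∀ H, ForbInd P H → ∀ a b : H.V, a ≠ b → ¬ H.graph.Adj a b →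
        ∃ G, ForbInd P G ∧ G.IsInduced (addEdge H a b)) →
      ∀ F : FGraph, P F ↔ (Nonempty F.V ∧ ∀ G, ForbInd P G → ¬ G.IsSub F)) := by
  constructor
  · constructor
    · intro hher H hH a b hab hnadj
      have hsub : H.IsSub (addEdge H a b) :=
        ⟨⟨id, fun h => (SimpleGraph.sup_adj _ _ _ _).mpr (Or.inl h)⟩, Function.injective_id⟩
      have hnp : ¬ P (addEdge H a b) := fun hp => hH.2.1 (hher _ H hp hsub hH.1)
      exact exists_forbInd hind (addEdge H a b) hH.1 hnp
    · exact hereditary_of_cond hind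
  · intro hC F
    have hher := hereditary_of_cond hind hC
    constructor
    · intro hF
      refine ⟨hP.vertexNonempty F hF, fun G hG hGF => hG.2.1 (hher F G hF hGF hG.1)⟩
    · rintro ⟨hne, hforb⟩
      by_contra hF
      obtain ⟨G, hG, ⟨e⟩⟩ := exists_forbInd hind F hne hF
      exact hforb G hG ⟨e.toHom, e.injective⟩
end
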